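/- Let n ≥ 1 and let χ be a primitive Dirichlet character modulo n (with complex values). Let l ≥ 1 be an integer such that χ and l have the same parity, i.e. χ(−1) = (−1)^l. Then the analytically continued Dirichlet L-function of χ satisfies L(χ, 1−l) ≠ 0. -/

import Mathlib

open DirichletCharacter Complex

/-- For a primitive Dirichlet character `χ` modulo `n ≥ 1` and an integer `l ≥ 1`
having the same parity as `χ` (i.e. `χ(-1) = (-1)^l`), the analytically continued
Dirichlet `L`-function satisfies `L(χ, 1 - l) ≠ 0`. -/
theorem dirichlet_L_ne_zero_of_same_parity
    (n : ℕ) [NeZero n] (hn : 1 ≤ n)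
    (χ : DirichletCharacter ℂ n) (hχ : χ.IsPrimitive)
    (l : ℕ) (hl : 1 ≤ l) (hpar : χ (-1) = (-1 : ℂ) ^ l) :
    DirichletCharacter.LFunction χ (1 - (l : ℂ)) ≠ 0 := by
  have hl0 : (l : ℂ) ≠ 0 := Nat.cast_ne_zero.mpr (by omega)
  -- parity bookkeeping
  have heo : (χ.Even ∧ Even l) ∨ (χ.Odd ∧ Odd l) := by
    rcases Nat.even_or_odd l with he | ho
    · exact Or.inl ⟨by rw [DirichletCharacter.Even, hpar, he.neg_one_pow], he⟩
    · exact Or.inr ⟨by rw [DirichletCharacter.Odd, hpar, ho.neg_one_pow], ho⟩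
  -- the Gamma factor does not vanish at `1 - l`
  have hg1 : gammaFactor χ (1 - (l : ℂ)) ≠ 0 := by
    rcases heo with ⟨he, hle⟩ | ⟨ho, hlo⟩
    · rw [he.gammaFactor_def, Ne, Gammaℝ_eq_zero_iff]
      rintro ⟨m, hm⟩
      have h' : (l : ℂ) = 2 * m + 1 := by linear_combination -hm
      have h'' : l = 2 * m + 1 := by exact_mod_cast h'
      rcases hle with ⟨k, hk⟩; omega
    · rw [ho.gammaFactor_def, Ne, Gammaℝ_eq_zero_iff]
      rintro ⟨m, hm⟩
      have h' : (l : ℂ) = 2 * m + 2 := by linear_combination -hm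
      have h'' : l = 2 * m + 2 := by exact_mod_cast h'
      rcases hlo with ⟨k, hk⟩; omega
  -- parity of `χ⁻¹`
  have hinv_val : χ⁻¹ (-1) = χ (-1) := by
    have h2 : χ (-1) * χ⁻¹ (-1) = 1 := by
      rw [← MulChar.mul_apply, mul_inv_cancel, MulChar.one_apply isUnit_one.neg]
    rcases χ.even_or_odd with h | h
    · rw [DirichletCharacter.Even] at h; rw [h] at h2 ⊢; simpa using h2
    · rw [DirichletCharacter.Odd] at h; rw [h] at h2 ⊢; linear_combination -h2
  -- the Gamma factor of `χ⁻¹` does not vanish at `l`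
  have hg2 : gammaFactor χ⁻¹ (l : ℂ) ≠ 0 := by
    rcases χ.even_or_odd with h | h
    · have hii : (χ⁻¹).Even := by rwa [DirichletCharacter.Even, hinv_val]
      rw [hii.gammaFactor_def]
      refine Gammaℝ_ne_zero_of_re_pos ?_
      simp only [natCast_re]
      exact_mod_cast (by omega : (0:ℕ) < l)
    · have hii : (χ⁻¹).Odd := by rwa [DirichletCharacter.Odd, hinv_val]
      rw [hii.gammaFactor_def]
      refine Gammaℝ_ne_zero_of_re_pos ?_
      simp only [add_re, natCast_re, one_re]
      positivity
  -- `L(χ⁻¹, l) ≠ 0`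
  have hLinv : LFunction χ⁻¹ (l : ℂ) ≠ 0 := by
    refine LFunction_ne_zero_of_one_le_re χ⁻¹ ?_ ?_
    · rcases eq_or_ne l 1 with rfl | hne
      · left
        rcases heo with ⟨_, hle⟩ | ⟨ho, _⟩
        · simpa using hle
        · intro h
          rw [inv_eq_one] at h
          rw [h] at ho
          rw [DirichletCharacter.Odd, MulChar.one_apply isUnit_one.neg] at ho
          norm_num at ho
      · right
        exact_mod_cast hne
    · simp only [natCast_re]
      exact_mod_cast hl
  -- root number is nonzero
  have hroot : rootNumber χ ≠ 0 := by
    rcases eq_or_ne n 1 with rfl | hn1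
    · rw [rootNumber_modOne]; exact one_ne_zero
    · have hχ1 : χ ≠ 1 := by
        intro h
        have h1 : χ.conductor = 1 := h ▸ conductor_one
        exact hn1 (hχ.symm.trans h1)
      have hgs : gaussSum χ ZMod.stdAddChar ≠ 0 := by
        intro h0
        have hF : ZMod.dft (⇑χ) = ZMod.dft (0 : ZMod n → ℂ) := by
          ext k
          rw [map_zero]
          have := hχ.fourierTransform_eq_inv_mul_gaussSum k
          rw [h0, mul_zero] at this
          simpa using this
        have hzero : (⇑χ : ZMod n → ℂ) = 0 := ZMod.dft.injective hF
        have h1 : χ 1 = 0 := congrFun hzero 1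
        rw [map_one] at h1
        exact one_ne_zero h1
      rw [rootNumber]
      refine div_ne_zero (div_ne_zero hgs (pow_ne_zero _ I_ne_zero)) ?_
      rw [Ne, cpow_eq_zero_iff]
      rintro ⟨h, -⟩
      exact Nat.cast_ne_zero.mpr (NeZero.ne n) h
  -- case hypothesis for the completed/uncompleted relation
  have hcase : (1 - (l : ℂ)) ≠ 0 ∨ n ≠ 1 := by
    rcases eq_or_ne l 1 with rfl | hne
    · right
      rcases heo with ⟨_, hle⟩ | ⟨ho, _⟩
      · simpa using hle
      · intro h
        subst h
        rw [level_one χ, DirichletCharacter.Odd,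
          MulChar.one_apply isUnit_one.neg] at ho
        norm_num at ho
    · left
      intro h
      have : (l : ℂ) = 1 := by linear_combination -h
      exact hne (by exact_mod_cast this)
  have hC : completedLFunction χ⁻¹ (l : ℂ)
      = LFunction χ⁻¹ (l : ℂ) * gammaFactor χ⁻¹ (l : ℂ) := by
    rw [LFunction_eq_completed_div_gammaFactor χ⁻¹ _ (Or.inl hl0),
      div_mul_cancel₀ _ hg2]
  have hN : (n : ℂ) ^ ((l : ℂ) - 1 / 2) ≠ 0 := by
    rw [Ne, cpow_eq_zero_iff]
    rintro ⟨h, -⟩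
    exact Nat.cast_ne_zero.mpr (NeZero.ne n) h
  rw [LFunction_eq_completed_div_gammaFactor χ _ hcase,
    hχ.completedLFunction_one_sub (l : ℂ), hC]
  exact div_ne_zero (mul_ne_zero (mul_ne_zero hN hroot) (mul_ne_zero hLinv hg2)) hg1
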